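/- Let n ≥ 2 be an integer. Let F : ℝⁿ → ℝⁿ be differentiable everywhere with Jacobian J(x), let x* ∈ ℝⁿ satisfy F(x*) = 0 with J* := J(x*) invertible and c := ‖J*⁻¹‖, and suppose ‖J(x) − J(x*)‖ ≤ M‖x − x*‖ for all x ∈ ℝⁿ, where M > 0. Let x_k ∈ ℝⁿ, B_k ∈ ℝ^{n×n} be generated by the greedy Broyden's method with each B_k invertible. If 48√n c M ‖x₀ − x*‖ + c‖B₀ − J(x₀)‖_F ≤ 1/3, then for all k ≥ 4n + 3, ‖B_k − J*‖_F ≤ 2 c⁻¹ e·(1 − 1/n)^{k/2}. -/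

import Mathlib

open Matrix

noncomputable def vecNorm {n : ℕ} (u : Fin n → ℝ) : ℝ := Real.sqrt (∑ i, u i ^ 2)

noncomputable def frobNorm {n : ℕ} (M : Matrix (Fin n) (Fin n) ℝ) : ℝ :=
  Real.sqrt (∑ i, ∑ j, M i j ^ 2)

noncomputable def specNorm {n : ℕ} (M : Matrix (Fin n) (Fin n) ℝ) : ℝ :=
  sSup {r : ℝ | ∃ u : Fin n → ℝ, vecNorm u = 1 ∧ r = vecNorm (M.mulVec u)}

noncomputable def broyd {n : ℕ} (B A : Matrix (Fin n) (Fin n) ℝ) (u : Fin n → ℝ) :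
    Matrix (Fin n) (Fin n) ℝ :=
  B + (∑ i, u i ^ 2)⁻¹ • ((A - B) * Matrix.vecMulVec u u)

noncomputable def matCLM {n : ℕ} (M : Matrix (Fin n) (Fin n) ℝ) :
    (Fin n → ℝ) →L[ℝ] (Fin n → ℝ) :=
  LinearMap.toContinuousLinearMap M.mulVecLin

/-! ### vecNorm and frobNorm basics -/

lemma vecNorm_eq {n : ℕ} (u : Fin n → ℝ) :
    vecNorm u = ‖(WithLp.toLp 2 u : EuclideanSpace ℝ (Fin n))‖ := by
  rw [EuclideanSpace.norm_eq]; simp [vecNorm, sq_abs]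

lemma vecNorm_nonneg {n : ℕ} (u : Fin n → ℝ) : 0 ≤ vecNorm u := Real.sqrt_nonneg _

lemma frobNorm_nonneg {n : ℕ} (M : Matrix (Fin n) (Fin n) ℝ) : 0 ≤ frobNorm M :=
  Real.sqrt_nonneg _

lemma vecNorm_sq {n : ℕ} (u : Fin n → ℝ) : vecNorm u ^ 2 = ∑ i, u i ^ 2 := by
  rw [vecNorm, Real.sq_sqrt]; positivity

lemma frobNorm_sq {n : ℕ} (M : Matrix (Fin n) (Fin n) ℝ) :
    frobNorm M ^ 2 = ∑ i, ∑ j, M i j ^ 2 := by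
  rw [frobNorm, Real.sq_sqrt]; positivity

lemma sq_le_sq_of_nonneg' {a b : ℝ} (hb : 0 ≤ b) (h : a ^ 2 ≤ b ^ 2) : a ≤ b := by
  nlinarith [sq_nonneg (a - b), sq_nonneg (a + b)]

lemma vecNorm_add_le {n : ℕ} (u v : Fin n → ℝ) :
    vecNorm (u + v) ≤ vecNorm u + vecNorm v := by
  rw [vecNorm_eq, vecNorm_eq, vecNorm_eq]
  exact norm_add_le (WithLp.toLp 2 u : EuclideanSpace ℝ (Fin n)) (WithLp.toLp 2 v : EuclideanSpace ℝ (Fin n))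

lemma vecNorm_neg {n : ℕ} (u : Fin n → ℝ) : vecNorm (-u) = vecNorm u := by
  simp [vecNorm]

lemma vecNorm_sub_le {n : ℕ} (u v : Fin n → ℝ) :
    vecNorm (u - v) ≤ vecNorm u + vecNorm v := by
  rw [sub_eq_add_neg]
  exact le_trans (vecNorm_add_le u (-v)) (by rw [vecNorm_neg])

lemma vecNorm_smul {n : ℕ} (a : ℝ) (u : Fin n → ℝ) :
    vecNorm (a • u) = |a| * vecNorm u := by
  rw [vecNorm_eq, vecNorm_eq,
    show (WithLp.toLp 2 (a • u) : EuclideanSpace ℝ (Fin n))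
      = a • (WithLp.toLp 2 u : EuclideanSpace ℝ (Fin n)) from rfl, norm_smul]
  simp [Real.norm_eq_abs]

lemma vecNorm_eq_zero_iff {n : ℕ} (u : Fin n → ℝ) : vecNorm u = 0 ↔ u = 0 := by
  rw [vecNorm_eq, norm_eq_zero, WithLp.toLp_eq_zero]

lemma vecNorm_single_one {n : ℕ} (i : Fin n) : vecNorm (Pi.single i 1 : Fin n → ℝ) = 1 := by
  have : ∑ j, ((Pi.single i 1 : Fin n → ℝ) j) ^ 2 = 1 := by
    rw [Finset.sum_eq_single i] <;> simp +contextual [Pi.single_apply]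
  rw [vecNorm, this, Real.sqrt_one]

lemma frobNorm_eq {n : ℕ} (M : Matrix (Fin n) (Fin n) ℝ) :
    frobNorm M = ‖(WithLp.toLp 2 (fun p : Fin n × Fin n => M p.1 p.2) : EuclideanSpace ℝ (Fin n × Fin n))‖ := by
  rw [EuclideanSpace.norm_eq]
  simp [frobNorm, sq_abs, Fintype.sum_prod_type]

lemma frobNorm_add_le {n : ℕ} (A B : Matrix (Fin n) (Fin n) ℝ) :
    frobNorm (A + B) ≤ frobNorm A + frobNorm B := by
  rw [frobNorm_eq, frobNorm_eq, frobNorm_eq]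
  exact norm_add_le (WithLp.toLp 2 (fun p : Fin n × Fin n => A p.1 p.2) : EuclideanSpace ℝ (Fin n × Fin n))
    (WithLp.toLp 2 (fun p : Fin n × Fin n => B p.1 p.2) : EuclideanSpace ℝ (Fin n × Fin n))

lemma frobNorm_triangle {n : ℕ} (A B C : Matrix (Fin n) (Fin n) ℝ) :
    frobNorm (A - C) ≤ frobNorm (A - B) + frobNorm (B - C) := by
  have : A - C = (A - B) + (B - C) := by abel
  rw [this]
  exact frobNorm_add_le _ _

lemma vecNorm_mulVec_le_frob {n : ℕ} (A : Matrix (Fin n) (Fin n) ℝ) (u : Fin n → ℝ) :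
    vecNorm (A.mulVec u) ≤ frobNorm A * vecNorm u := by
  have hb : 0 ≤ frobNorm A * vecNorm u := mul_nonneg (frobNorm_nonneg A) (vecNorm_nonneg u)
  refine sq_le_sq_of_nonneg' hb ?_
  rw [vecNorm_sq, mul_pow, vecNorm_sq, frobNorm_sq, Finset.sum_mul]
  refine Finset.sum_le_sum fun i _ => ?_
  simpa [Matrix.mulVec, dotProduct] using
    Finset.sum_mul_sq_le_sq_mul_sq Finset.univ (fun j => A i j) u

/-! ### specNorm basics -/

lemma specSet_bdd {n : ℕ} (A : Matrix (Fin n) (Fin n) ℝ) :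
    BddAbove {r : ℝ | ∃ u : Fin n → ℝ, vecNorm u = 1 ∧ r = vecNorm (A.mulVec u)} := by
  refine ⟨frobNorm A, fun r hr => ?_⟩
  obtain ⟨u, hu, rfl⟩ := hr
  simpa [hu] using vecNorm_mulVec_le_frob A u

lemma le_specNorm_of_unit {n : ℕ} (A : Matrix (Fin n) (Fin n) ℝ) {u : Fin n → ℝ}
    (hu : vecNorm u = 1) : vecNorm (A.mulVec u) ≤ specNorm A :=
  le_csSup (specSet_bdd A) ⟨u, hu, rfl⟩

lemma specNorm_le {n : ℕ} (A : Matrix (Fin n) (Fin n) ℝ) (hn : 0 < n) {b : ℝ}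
    (h : ∀ u : Fin n → ℝ, vecNorm u = 1 → vecNorm (A.mulVec u) ≤ b) : specNorm A ≤ b := by
  refine csSup_le ⟨vecNorm (A.mulVec (Pi.single ⟨0, hn⟩ 1)), Pi.single ⟨0, hn⟩ 1,
    vecNorm_single_one _, rfl⟩ ?_
  rintro r ⟨u, hu, rfl⟩; exact h u hu

lemma specNorm_nonneg {n : ℕ} (A : Matrix (Fin n) (Fin n) ℝ) (hn : 0 < n) : 0 ≤ specNorm A :=
  le_trans (vecNorm_nonneg _) (le_specNorm_of_unit A (vecNorm_single_one ⟨0, hn⟩))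

lemma specNorm_le_frob {n : ℕ} (A : Matrix (Fin n) (Fin n) ℝ) (hn : 0 < n) :
    specNorm A ≤ frobNorm A := by
  refine specNorm_le A hn fun u hu => ?_
  simpa [hu] using vecNorm_mulVec_le_frob A u

lemma vecNorm_mulVec_le_spec {n : ℕ} (A : Matrix (Fin n) (Fin n) ℝ) (hn : 0 < n)
    (u : Fin n → ℝ) : vecNorm (A.mulVec u) ≤ specNorm A * vecNorm u := by
  rcases eq_or_ne u 0 with rfl | hu
  · simp [Matrix.mulVec_zero, (vecNorm_eq_zero_iff (0 : Fin n → ℝ)).2 rfl]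
  · have hnu : vecNorm u ≠ 0 := fun h => hu ((vecNorm_eq_zero_iff u).1 h)
    have hpos : 0 < vecNorm u := lt_of_le_of_ne (vecNorm_nonneg u) (Ne.symm hnu)
    have hunit : vecNorm ((vecNorm u)⁻¹ • u) = 1 := by
      rw [vecNorm_smul, abs_of_pos (by positivity), inv_mul_cancel₀ hnu]
    have h := le_specNorm_of_unit A hunit
    rw [Matrix.mulVec_smul, vecNorm_smul, abs_of_pos (by positivity)] at h
    calc vecNorm (A.mulVec u) = vecNorm u * ((vecNorm u)⁻¹ * vecNorm (A.mulVec u)) := by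
          field_simp
      _ ≤ vecNorm u * specNorm A := mul_le_mul_of_nonneg_left h (le_of_lt hpos)
      _ = specNorm A * vecNorm u := mul_comm _ _

lemma specNorm_neg {n : ℕ} (A : Matrix (Fin n) (Fin n) ℝ) : specNorm (-A) = specNorm A := by
  unfold specNorm
  congr 1
  ext r
  constructor <;> rintro ⟨u, hu, rfl⟩ <;> refine ⟨u, hu, ?_⟩ <;>
    simp [Matrix.neg_mulVec, vecNorm, neg_sq]

lemma specNorm_add_le {n : ℕ} (hn : 0 < n) (A B : Matrix (Fin n) (Fin n) ℝ) :
    specNorm (A + B) ≤ specNorm A + specNorm B := by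
  refine specNorm_le _ hn fun u hu => ?_
  rw [Matrix.add_mulVec]
  exact le_trans (vecNorm_add_le _ _)
    (add_le_add (le_specNorm_of_unit A hu) (le_specNorm_of_unit B hu))

lemma specNorm_mul_le {n : ℕ} (hn : 0 < n) (A B : Matrix (Fin n) (Fin n) ℝ) :
    specNorm (A * B) ≤ specNorm A * specNorm B := by
  refine specNorm_le _ hn fun u hu => ?_
  rw [← Matrix.mulVec_mulVec]
  calc vecNorm (A.mulVec (B.mulVec u)) ≤ specNorm A * vecNorm (B.mulVec u) :=
        vecNorm_mulVec_le_spec A hn _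
    _ ≤ specNorm A * (specNorm B * vecNorm u) :=
        mul_le_mul_of_nonneg_left (vecNorm_mulVec_le_spec B hn u) (specNorm_nonneg A hn)
    _ = specNorm A * specNorm B := by rw [hu, mul_one]

lemma abs_le_vecNorm {n : ℕ} (u : Fin n → ℝ) (i : Fin n) : |u i| ≤ vecNorm u := by
  refine sq_le_sq_of_nonneg' (vecNorm_nonneg u) ?_
  rw [vecNorm_sq, sq_abs]
  exact Finset.single_le_sum (f := fun j => u j ^ 2) (fun j _ => sq_nonneg _) (Finset.mem_univ i)

lemma specNorm_pos {n : ℕ} (hn : 0 < n) (A : Matrix (Fin n) (Fin n) ℝ) (hA : A ≠ 0) :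
    0 < specNorm A := by
  have : ∃ i j, A i j ≠ 0 := by
    by_contra h
    push_neg at h
    exact hA (by ext i j; exact h i j)
  obtain ⟨i, j, hij⟩ := this
  have h1 : |A i j| ≤ vecNorm (A.mulVec (Pi.single j 1)) := by
    have h := abs_le_vecNorm (A.mulVec (Pi.single j 1)) i
    simp only [Matrix.mulVec_single, mul_one] at h ⊢
    simpa using h
  have h2 := le_specNorm_of_unit A (vecNorm_single_one j)
  have := abs_pos.2 hij
  linarith

lemma frobNorm_le_sqrt_spec {n : ℕ} (hn : 0 < n) (A : Matrix (Fin n) (Fin n) ℝ) :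
    frobNorm A ≤ Real.sqrt n * specNorm A := by
  have hb : (0:ℝ) ≤ Real.sqrt n * specNorm A :=
    mul_nonneg (Real.sqrt_nonneg _) (specNorm_nonneg A hn)
  refine sq_le_sq_of_nonneg' hb ?_
  rw [mul_pow, Real.sq_sqrt (Nat.cast_nonneg n), frobNorm_sq, Finset.sum_comm]
  have hcol : ∀ j : Fin n, ∑ i, A i j ^ 2 ≤ specNorm A ^ 2 := by
    intro j
    have h1 : vecNorm (A.mulVec (Pi.single j 1)) ≤ specNorm A :=
      le_specNorm_of_unit A (vecNorm_single_one j)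
    have h2 : vecNorm (A.mulVec (Pi.single j 1)) ^ 2 = ∑ i, A i j ^ 2 := by
      rw [vecNorm_sq, Matrix.mulVec_single]
      simp
    rw [← h2]
    exact pow_le_pow_left₀ (vecNorm_nonneg _) h1 2
  calc ∑ j, ∑ i, A i j ^ 2 ≤ ∑ _j : Fin n, specNorm A ^ 2 :=
        Finset.sum_le_sum fun j _ => hcol j
    _ = n * specNorm A ^ 2 := by simp [mul_comm]

lemma neumann_bound {n : ℕ} (hn : 0 < n) (Js B : Matrix (Fin n) (Fin n) ℝ)
    (hJ : IsUnit Js) (hB : IsUnit B)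
    {c : ℝ} (hc : c = specNorm Js⁻¹) (h : specNorm (B - Js) * c ≤ 1/2) :
    specNorm B⁻¹ ≤ 2 * c := by
  have hJd : IsUnit Js.det := (Matrix.isUnit_iff_isUnit_det Js).1 hJ
  have hBd : IsUnit B.det := (Matrix.isUnit_iff_isUnit_det B).1 hB
  have key : B⁻¹ = Js⁻¹ + B⁻¹ * (Js - B) * Js⁻¹ := by
    have h1 : B⁻¹ * Js = 1 + B⁻¹ * (Js - B) := by
      rw [Matrix.mul_sub, Matrix.nonsing_inv_mul B hBd]; abel
    calc B⁻¹ = B⁻¹ * (Js * Js⁻¹) := by rw [Matrix.mul_nonsing_inv Js hJd, Matrix.mul_one]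
      _ = (B⁻¹ * Js) * Js⁻¹ := by rw [Matrix.mul_assoc]
      _ = Js⁻¹ + B⁻¹ * (Js - B) * Js⁻¹ := by rw [h1, Matrix.add_mul, Matrix.one_mul]
  have hs : specNorm (Js - B) = specNorm (B - Js) := by
    rw [show Js - B = -(B - Js) from (neg_sub B Js).symm, specNorm_neg]
  have hβ : specNorm B⁻¹ ≤ c + specNorm B⁻¹ * (specNorm (B - Js) * c) := by
    calc specNorm B⁻¹ = specNorm (Js⁻¹ + B⁻¹ * (Js - B) * Js⁻¹) := by rw [← key]
      _ ≤ specNorm Js⁻¹ + specNorm (B⁻¹ * (Js - B) * Js⁻¹) := specNorm_add_le hn _ _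
      _ ≤ specNorm Js⁻¹ + specNorm (B⁻¹ * (Js - B)) * specNorm Js⁻¹ := by
          have := specNorm_mul_le hn (B⁻¹ * (Js - B)) Js⁻¹
          linarith
      _ ≤ specNorm Js⁻¹ + specNorm B⁻¹ * specNorm (Js - B) * specNorm Js⁻¹ := by
          have h1 := specNorm_mul_le hn B⁻¹ (Js - B)
          have h2 := specNorm_nonneg Js⁻¹ hn
          nlinarith
      _ = c + specNorm B⁻¹ * (specNorm (B - Js) * c) := by rw [hc, hs]; ring
  have h0 : 0 ≤ specNorm B⁻¹ := specNorm_nonneg _ hn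
  nlinarith

/-! ### Broyden update: greedy contraction -/

lemma broyd_sub_apply {n : ℕ} (B A : Matrix (Fin n) (Fin n) ℝ) (p : Fin n) (i j : Fin n) :
    (broyd B A (Pi.single p 1) - A) i j = if j = p then 0 else (B - A) i j := by
  have hsum : (∑ i, (Pi.single p 1 : Fin n → ℝ) i ^ 2) = 1 := by
    rw [Finset.sum_eq_single p] <;> simp +contextual [Pi.single_apply]
  have hmul : ∀ j : Fin n, ((A - B) * Matrix.vecMulVec (Pi.single p 1) (Pi.single p 1)
      : Matrix (Fin n) (Fin n) ℝ) i j = (if j = p then (A - B) i p else 0) := by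
    intro j
    simp only [Matrix.mul_apply, Matrix.vecMulVec_apply, Pi.single_apply]
    rw [Finset.sum_eq_single p] <;> simp +contextual [eq_comm]
  simp only [broyd, hsum, inv_one, one_smul, Matrix.sub_apply, Matrix.add_apply, hmul j]
  by_cases h : j = p <;> simp [h, Matrix.sub_apply] <;> ring

lemma broyd_contraction {n : ℕ} (hn : 0 < n) (B A : Matrix (Fin n) (Fin n) ℝ) (p : Fin n)
    (hg : ∀ i, vecNorm ((B - A).mulVec (Pi.single i 1))
      ≤ vecNorm ((B - A).mulVec (Pi.single p 1))) :
    frobNorm (broyd B A (Pi.single p 1) - A) ^ 2 ≤ (1 - 1 / n) * frobNorm (B - A) ^ 2 := by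
  set E := B - A with hE
  have colsq : ∀ j : Fin n, vecNorm (E.mulVec (Pi.single j 1)) ^ 2 = ∑ i, E i j ^ 2 := by
    intro j
    rw [vecNorm_sq, Matrix.mulVec_single]
    simp
  have h1 : frobNorm (broyd B A (Pi.single p 1) - A) ^ 2
      = frobNorm E ^ 2 - ∑ i, E i p ^ 2 := by
    rw [frobNorm_sq, frobNorm_sq]
    have : ∀ i j, (broyd B A (Pi.single p 1) - A) i j ^ 2
        = E i j ^ 2 - (if j = p then E i p ^ 2 else 0) := by
      intro i j
      rw [broyd_sub_apply]
      by_cases h : j = p <;> simp [h, hE, Matrix.sub_apply]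
    simp only [this, Finset.sum_sub_distrib]
    congr 1
    rw [Finset.sum_comm]
    simp
  have hcolsq_le : ∀ j : Fin n, ∑ i, E i j ^ 2 ≤ ∑ i, E i p ^ 2 := by
    intro j
    rw [← colsq j, ← colsq p]
    have h := hg j
    have h0 := vecNorm_nonneg (E.mulVec (Pi.single j 1))
    nlinarith
  have hfrob_le : frobNorm E ^ 2 ≤ n * ∑ i, E i p ^ 2 := by
    rw [frobNorm_sq, Finset.sum_comm]
    calc ∑ j, ∑ i, E i j ^ 2 ≤ ∑ _j : Fin n, ∑ i, E i p ^ 2 :=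
          Finset.sum_le_sum fun j _ => hcolsq_le j
      _ = n * ∑ i, E i p ^ 2 := by simp [mul_comm]
  have hnpos : (0:ℝ) < n := by exact_mod_cast hn
  rw [h1]
  have hdiv : frobNorm E ^ 2 / n ≤ ∑ i, E i p ^ 2 := by
    rw [div_le_iff₀ hnpos]
    linarith [hfrob_le]
  have hfn : (1 - 1/n : ℝ) * frobNorm E ^ 2 = frobNorm E ^ 2 - frobNorm E ^ 2 / n := by
    field_simp
  linarith

/-! ### Taylor bound -/

lemma matCLM_apply {n : ℕ} (A : Matrix (Fin n) (Fin n) ℝ) (v : Fin n → ℝ) :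
    matCLM A v = A.mulVec v := rfl

lemma taylor_bound {n : ℕ} (hn : 0 < n) (F : (Fin n → ℝ) → (Fin n → ℝ))
    (J : (Fin n → ℝ) → Matrix (Fin n) (Fin n) ℝ)
    (hF : ∀ x, HasFDerivAt F (matCLM (J x)) x)
    (xs : Fin n → ℝ) (M : ℝ) (hM : 0 ≤ M)
    (hLip : ∀ x, specNorm (J x - J xs) ≤ M * vecNorm (x - xs)) (y : Fin n → ℝ) :
    vecNorm (F y - F xs - (J xs).mulVec (y - xs)) ≤ M * vecNorm (y - xs) ^ 2 := by
  classical
  set E := EuclideanSpace ℝ (Fin n)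
  let φ : E ≃L[ℝ] (Fin n → ℝ) := EuclideanSpace.equiv (Fin n) ℝ
  have hφs : ∀ u : Fin n → ℝ, ‖φ.symm u‖ = vecNorm u := fun u => (vecNorm_eq u).symm
  have hφn : ∀ z : E, vecNorm (φ z) = ‖z‖ := by
    intro z
    rw [vecNorm_eq (φ z)]
    rfl
  let g : E → E := fun z => φ.symm (F (φ z) - (J xs).mulVec (φ z))
  let D : E → (E →L[ℝ] E) := fun z =>
    ((φ.symm : (Fin n → ℝ) →L[ℝ] E).comp
      ((matCLM (J (φ z)) - matCLM (J xs)))).comp (φ : E →L[ℝ] (Fin n → ℝ))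
  have hg : ∀ z : E, HasFDerivAt g (D z) z := by
    intro z
    have h1 : HasFDerivAt (fun w => F w - (J xs).mulVec w)
        (matCLM (J (φ z)) - matCLM (J xs)) (φ z) := by
      have h2 : HasFDerivAt (fun w : Fin n → ℝ => (J xs).mulVec w) (matCLM (J xs)) (φ z) :=
        (matCLM (J xs)).hasFDerivAt
      exact (hF (φ z)).sub h2
    have h3 := h1.comp z (φ.hasFDerivAt (x := z))
    exact (φ.symm.hasFDerivAt.comp z h3)
  set r := vecNorm (y - xs) with hr
  have hr0 : 0 ≤ r := vecNorm_nonneg _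
  let xs' : E := φ.symm xs
  let y' : E := φ.symm y
  have hbound : ∀ z ∈ Metric.closedBall xs' r, ‖D z‖ ≤ M * r := by
    intro z hz
    refine ContinuousLinearMap.opNorm_le_bound _ (by positivity) fun v => ?_
    have hDz : D z v = φ.symm ((J (φ z) - J xs).mulVec (φ v)) := by
      simp only [D, ContinuousLinearMap.comp_apply, ContinuousLinearMap.coe_sub',
        Pi.sub_apply, ContinuousLinearEquiv.coe_coe, matCLM_apply]
      rw [Matrix.sub_mulVec]
    rw [hDz, hφs]
    have h1 : vecNorm ((J (φ z) - J xs).mulVec (φ v))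
        ≤ specNorm (J (φ z) - J xs) * vecNorm (φ v) := vecNorm_mulVec_le_spec _ hn _
    have h2 : specNorm (J (φ z) - J xs) ≤ M * vecNorm (φ z - xs) := hLip (φ z)
    have h3 : vecNorm (φ z - xs) ≤ r := by
      have heq : vecNorm (φ z - xs) = ‖z - xs'‖ := by
        rw [vecNorm_eq]
        rfl
      rw [heq]
      rw [← dist_eq_norm]; exact Metric.mem_closedBall.1 hz
    have h4 := hφn v
    have hv0 := vecNorm_nonneg (φ v)
    calc vecNorm ((J (φ z) - J xs).mulVec (φ v))
        ≤ specNorm (J (φ z) - J xs) * vecNorm (φ v) := h1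
      _ ≤ (M * vecNorm (φ z - xs)) * vecNorm (φ v) := mul_le_mul_of_nonneg_right h2 hv0
      _ ≤ (M * r) * vecNorm (φ v) :=
          mul_le_mul_of_nonneg_right (mul_le_mul_of_nonneg_left h3 hM) hv0
      _ = M * r * ‖v‖ := by rw [h4]
  have hmem1 : xs' ∈ Metric.closedBall xs' r := Metric.mem_closedBall_self hr0
  have hmem2 : y' ∈ Metric.closedBall xs' r := by
    rw [Metric.mem_closedBall, dist_eq_norm]
    have heq : ‖y' - xs'‖ = vecNorm (y - xs) := by
      rw [vecNorm_eq]
      rfl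
    rw [heq]
  have hconv : Convex ℝ (Metric.closedBall xs' r) := convex_closedBall _ _
  have hmain := hconv.norm_image_sub_le_of_norm_hasFDerivWithin_le
    (fun z _ => (hg z).hasFDerivWithinAt) hbound hmem1 hmem2
  have hgy : g y' - g xs' = φ.symm (F y - F xs - (J xs).mulVec (y - xs)) := by
    simp only [g]
    have h1 : φ y' = y := φ.apply_symm_apply y
    have h2 : φ xs' = xs := φ.apply_symm_apply xs
    rw [h1, h2, ← map_sub]
    congr 1
    rw [Matrix.mulVec_sub]
    abel
  have hnorm : ‖g y' - g xs'‖ = vecNorm (F y - F xs - (J xs).mulVec (y - xs)) := by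
    rw [hgy, hφs]
  have hyx : ‖y' - xs'‖ = r := by
    rw [show y' - xs' = φ.symm (y - xs) from (map_sub φ.symm y xs).symm, hφs]
  rw [hnorm, hyx] at hmain
  calc vecNorm (F y - F xs - (J xs).mulVec (y - xs)) ≤ M * r * r := hmain
    _ = M * r ^ 2 := by ring

lemma frobNorm_neg {n : ℕ} (A : Matrix (Fin n) (Fin n) ℝ) : frobNorm (-A) = frobNorm A := by
  simp [frobNorm]


set_option maxHeartbeats 2000000 in
theorem greedy_broyden_jacobian_to_Jstar {n : ℕ} (hn : 2 ≤ n)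
    (F : (Fin n → ℝ) → (Fin n → ℝ))
    (J : (Fin n → ℝ) → Matrix (Fin n) (Fin n) ℝ)
    (hF : ∀ x, HasFDerivAt F (matCLM (J x)) x)
    (xs : Fin n → ℝ) (hxs : F xs = 0) (hJs : IsUnit (J xs))
    (c : ℝ) (hc : c = specNorm (J xs)⁻¹)
    (M : ℝ) (hM : 0 < M)
    (hLip : ∀ x, specNorm (J x - J xs) ≤ M * vecNorm (x - xs))
    (x : ℕ → (Fin n → ℝ)) (B : ℕ → Matrix (Fin n) (Fin n) ℝ) (idx : ℕ → Fin n)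
    (hBinv : ∀ k, IsUnit (B k))
    (hxrec : ∀ k, x (k + 1) = x k - (B k)⁻¹.mulVec (F (x k)))
    (hgreedy : ∀ k, ∀ i : Fin n,
      vecNorm ((B k - J (x (k + 1))).mulVec (Pi.single i 1))
        ≤ vecNorm ((B k - J (x (k + 1))).mulVec (Pi.single (idx k) 1)))
    (hBrec : ∀ k, B (k + 1) = broyd (B k) (J (x (k + 1))) (Pi.single (idx k) 1))
    (hinit : 48 * Real.sqrt n * c * M * vecNorm (x 0 - xs)
      + c * frobNorm (B 0 - J (x 0)) ≤ 1 / 3) :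
    ∀ k : ℕ, 4 * n + 3 ≤ k →
      frobNorm (B k - J xs)
        ≤ 2 * c⁻¹ * Real.exp 1 * (1 - 1 / (n : ℝ)) ^ ((k : ℝ) / 2) := by
  have hn0 : 0 < n := lt_of_lt_of_le two_pos hn
  -- c is positive
  have hJd : IsUnit (J xs).det := (Matrix.isUnit_iff_isUnit_det _).1 hJs
  have hinv_ne : (J xs)⁻¹ ≠ 0 := by
    intro h0
    have h1 : (J xs)⁻¹ * (J xs) = 1 := Matrix.nonsing_inv_mul _ hJd
    rw [h0, Matrix.zero_mul] at h1
    have h2 : (0 : Matrix (Fin n) (Fin n) ℝ) ⟨0, hn0⟩ ⟨0, hn0⟩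
        = (1 : Matrix (Fin n) (Fin n) ℝ) ⟨0, hn0⟩ ⟨0, hn0⟩ := by rw [h1]
    simp [Matrix.one_apply_eq] at h2
  have hcpos : 0 < c := hc ▸ specNorm_pos hn0 _ hinv_ne
  -- abbreviations
  set θ : ℝ := Real.sqrt (1 - 1/n) with hθ
  let r : ℕ → ℝ := fun k => vecNorm (x k - xs)
  let s : ℕ → ℝ := fun k => c * (Real.sqrt n * (M * r k))
  let t : ℕ → ℝ := fun k => c * frobNorm (B k - J (x k))
  have hrdef : ∀ k, r k = vecNorm (x k - xs) := fun _ => rfl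
  have hsdef : ∀ k, s k = c * (Real.sqrt n * (M * r k)) := fun _ => rfl
  have htdef : ∀ k, t k = c * frobNorm (B k - J (x k)) := fun _ => rfl
  -- basic positivity facts
  have hr0 : ∀ k, 0 ≤ r k := fun k => vecNorm_nonneg _
  have hsq0 : (0:ℝ) ≤ Real.sqrt n := Real.sqrt_nonneg _
  have hs0 : ∀ k, 0 ≤ s k := fun k => by
    rw [hsdef]
    exact mul_nonneg (le_of_lt hcpos)
      (mul_nonneg hsq0 (mul_nonneg (le_of_lt hM) (hr0 k)))
  have ht0 : ∀ k, 0 ≤ t k := fun k => by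
    rw [htdef]
    exact mul_nonneg (le_of_lt hcpos) (frobNorm_nonneg _)
  have hsqn1 : (1:ℝ) ≤ Real.sqrt n := by
    rw [show (1:ℝ) = Real.sqrt 1 from (Real.sqrt_one).symm]
    exact Real.sqrt_le_sqrt (by exact_mod_cast hn0)
  have hn2 : (2:ℝ) ≤ (n:ℝ) := by exact_mod_cast hn
  have hinvn : (1:ℝ)/n ≤ 1/2 := by
    apply div_le_div_of_nonneg_left (by norm_num) (by norm_num) hn2
  have hinvn0 : (0:ℝ) ≤ 1/n := by positivity
  have h1n : (0:ℝ) ≤ 1 - 1/n := by linarith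
  have hθ0 : 0 ≤ θ := Real.sqrt_nonneg _
  have hθ1 : θ ≤ 1 := by
    have h := Real.sqrt_le_sqrt (show 1 - 1/(n:ℝ) ≤ 1 by linarith)
    rwa [Real.sqrt_one] at h
  have hθ707 : (707:ℝ)/1000 ≤ θ := by
    rw [hθ, show (707:ℝ)/1000 = Real.sqrt ((707/1000)^2) from
      (Real.sqrt_sq (by norm_num)).symm]
    apply Real.sqrt_le_sqrt
    nlinarith
  have hinit' : 48 * s 0 + t 0 ≤ 1/3 := by
    have he : 48 * s 0 + t 0 = 48 * Real.sqrt n * c * M * vecNorm (x 0 - xs)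
        + c * frobNorm (B 0 - J (x 0)) := by
      rw [hsdef, htdef, hrdef]; ring
    rw [he]; exact hinit
  have hs00 : 0 ≤ s 0 := hs0 0
  have ht00 : 0 ≤ t 0 := ht0 0
  -- Jacobian Lipschitz bound in Frobenius norm
  have hcJ : ∀ z : Fin n → ℝ, c * frobNorm (J z - J xs)
      ≤ c * (Real.sqrt n * (M * vecNorm (z - xs))) := by
    intro z
    have h1 : frobNorm (J z - J xs) ≤ Real.sqrt n * specNorm (J z - J xs) :=
      frobNorm_le_sqrt_spec hn0 _
    have h2 : specNorm (J z - J xs) ≤ M * vecNorm (z - xs) := hLip z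
    have h3 : frobNorm (J z - J xs) ≤ Real.sqrt n * (M * vecNorm (z - xs)) :=
      le_trans h1 (mul_le_mul_of_nonneg_left h2 hsq0)
    exact mul_le_mul_of_nonneg_left h3 (le_of_lt hcpos)
  -- distance of B to J* in Frobenius norm
  have hcB : ∀ k, c * frobNorm (B k - J xs) ≤ t k + s k := by
    intro k
    have h1 : frobNorm (B k - J xs)
        ≤ frobNorm (B k - J (x k)) + frobNorm (J (x k) - J xs) := frobNorm_triangle _ _ _
    have h2 := hcJ (x k)
    rw [htdef, hsdef, hrdef]
    have h3 := mul_le_mul_of_nonneg_left h1 (le_of_lt hcpos)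
    linarith
  have hcS : ∀ k, c * specNorm (B k - J xs) ≤ t k + s k := by
    intro k
    refine le_trans ?_ (hcB k)
    exact mul_le_mul_of_nonneg_left (specNorm_le_frob _ hn0) (le_of_lt hcpos)
  -- the Newton step estimate
  have hN : ∀ k, t k + s k ≤ 1/2 → s (k+1) ≤ 2 * s k * (t k + 2 * s k) := by
    intro k hk
    have hdet : IsUnit (B k).det := (Matrix.isUnit_iff_isUnit_det _).1 (hBinv k)
    set w : Fin n → ℝ := (B k - J xs).mulVec (x k - xs)
        - (F (x k) - F xs - (J xs).mulVec (x k - xs)) with hwdef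
    have hxid : x (k+1) - xs = (B k)⁻¹.mulVec w := by
      have hw : w = (B k).mulVec (x k - xs) - F (x k) := by
        rw [hwdef, hxs, Matrix.sub_mulVec]
        abel
      rw [hw, Matrix.mulVec_sub, Matrix.mulVec_mulVec, Matrix.nonsing_inv_mul _ hdet,
        Matrix.one_mulVec, hxrec k]
      abel
    have hB2c : specNorm (B k)⁻¹ ≤ 2 * c := by
      apply neumann_bound hn0 (J xs) (B k) hJs (hBinv k) hc
      have h1 := hcS k
      have h2 := specNorm_nonneg (B k - J xs) hn0
      nlinarith
    have htay := taylor_bound hn0 F J hF xs M (le_of_lt hM) hLip (x k)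
    set σ : ℝ := specNorm (B k - J xs) with hσ
    have hσ0 : 0 ≤ σ := specNorm_nonneg _ hn0
    have hw1 : vecNorm w ≤ σ * r k + M * r k ^ 2 := by
      rw [hwdef]
      refine le_trans (vecNorm_sub_le _ _) ?_
      have h1 : vecNorm ((B k - J xs).mulVec (x k - xs)) ≤ σ * vecNorm (x k - xs) :=
        vecNorm_mulVec_le_spec _ hn0 _
      rw [hrdef]
      exact add_le_add h1 htay
    have hr1 : r (k+1) ≤ 2*c*(σ * r k + M * r k ^ 2) := by
      rw [hrdef, hxid]
      calc vecNorm ((B k)⁻¹.mulVec w) ≤ specNorm (B k)⁻¹ * vecNorm w :=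
            vecNorm_mulVec_le_spec _ hn0 _
        _ ≤ (2*c) * (σ * r k + M * r k ^ 2) := by
            have hv0 := vecNorm_nonneg w
            nlinarith
        _ = 2*c*(σ * r k + M * r k ^ 2) := by ring
    have e1 : c * σ ≤ t k + s k := hcS k
    have e2 : c * (M * r k) ≤ s k := by
      rw [hsdef]
      nlinarith [mul_nonneg (mul_nonneg (le_of_lt hcpos) (le_of_lt hM)) (hr0 k)]
    have hcaM : (0:ℝ) ≤ c * (Real.sqrt n * M) := by positivity
    have key := mul_le_mul_of_nonneg_left hr1 hcaM
    have hsk' : c * (Real.sqrt n * (M * r k)) = s k := (hsdef k).symm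
    calc s (k+1) = (c * (Real.sqrt n * M)) * r (k+1) := by rw [hsdef]; ring
      _ ≤ (c * (Real.sqrt n * M)) * (2*c*(σ * r k + M * r k ^ 2)) := key
      _ = 2*(c*σ)*(c * (Real.sqrt n * (M * r k)))
          + 2*(c*(M * r k))*(c * (Real.sqrt n * (M * r k))) := by ring
      _ = 2*(c*σ)*(s k) + 2*(c*(M * r k))*(s k) := by rw [hsk']
      _ ≤ 2*(t k + s k)*(s k) + 2*(s k)*(s k) := by
          have g1 := mul_le_mul_of_nonneg_right e1 (hs0 k)
          have g2 := mul_le_mul_of_nonneg_right e2 (hs0 k)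
          linarith
      _ = 2*s k*(t k + 2*s k) := by ring
  -- the Frobenius contraction estimate
  have hT : ∀ k, t (k+1) ≤ θ * (t k + s k + s (k+1)) := by
    intro k
    have hcon := broyd_contraction hn0 (B k) (J (x (k+1))) (idx k) (hgreedy k)
    have hb := frobNorm_nonneg (B k - J (x (k+1)))
    have hθsq : θ^2 = 1 - 1/n := Real.sq_sqrt h1n
    have h1 : frobNorm (B (k+1) - J (x (k+1))) ≤ θ * frobNorm (B k - J (x (k+1))) := by
      rw [hBrec k]
      refine sq_le_sq_of_nonneg' (mul_nonneg hθ0 hb) ?_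
      calc frobNorm (broyd (B k) (J (x (k+1))) (Pi.single (idx k) 1) - J (x (k+1))) ^ 2
          ≤ (1 - 1/n) * frobNorm (B k - J (x (k+1))) ^ 2 := hcon
        _ = (θ * frobNorm (B k - J (x (k+1)))) ^ 2 := by rw [mul_pow, hθsq]
    have h2 : frobNorm (B k - J (x (k+1)))
        ≤ frobNorm (B k - J (x k)) + frobNorm (J (x k) - J xs)
          + frobNorm (J (x (k+1)) - J xs) := by
      have ha : frobNorm (B k - J (x (k+1)))
          ≤ frobNorm (B k - J (x k)) + frobNorm (J (x k) - J (x (k+1))) :=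
        frobNorm_triangle _ _ _
      have hbb : frobNorm (J (x k) - J (x (k+1)))
          ≤ frobNorm (J (x k) - J xs) + frobNorm (J xs - J (x (k+1))) :=
        frobNorm_triangle _ _ _
      have hcc : frobNorm (J xs - J (x (k+1))) = frobNorm (J (x (k+1)) - J xs) := by
        rw [show J xs - J (x (k+1)) = -(J (x (k+1)) - J xs) from (neg_sub _ _).symm,
          frobNorm_neg]
      linarith
    have h3 : c * frobNorm (B k - J (x (k+1))) ≤ t k + s k + s (k+1) := by
      have hj1 := hcJ (x k)
      have hj2 := hcJ (x (k+1))
      have h4 := mul_le_mul_of_nonneg_left h2 (le_of_lt hcpos)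
      rw [htdef, hsdef, hsdef, hrdef, hrdef]
      linarith
    calc t (k+1) = c * frobNorm (B (k+1) - J (x (k+1))) := htdef _
      _ ≤ c * (θ * frobNorm (B k - J (x (k+1)))) :=
          mul_le_mul_of_nonneg_left h1 (le_of_lt hcpos)
      _ = θ * (c * frobNorm (B k - J (x (k+1)))) := by ring
      _ ≤ θ * (t k + s k + s (k+1)) := mul_le_mul_of_nonneg_left h3 hθ0
  -- first induction
  have P : ∀ k, s k ≤ (2/3:ℝ)^k * s 0 ∧ t k ≤ t 0 + 6 * s 0 * (1 - (2/3:ℝ)^k) := by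
    intro k
    induction k with
    | zero => constructor <;> simp
    | succ k ih =>
      obtain ⟨hsk, htk⟩ := ih
      have hqk0 : (0:ℝ) ≤ (2/3:ℝ)^k := by positivity
      have hqk1 : (2/3:ℝ)^k ≤ 1 := pow_le_one₀ (by norm_num) (by norm_num)
      have hX0 : (0:ℝ) ≤ (2/3:ℝ)^k * s 0 := mul_nonneg hqk0 hs00
      have hqs : (2/3:ℝ)^k * s 0 ≤ s 0 := by nlinarith
      have hsum : t k + s k ≤ 1/2 := by linarith
      have h2s : t k + 2*s k ≤ 1/3 := by linarith
      have hstep := hN k hsum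
      have hs1 : s (k+1) ≤ (2/3:ℝ)^(k+1) * s 0 := by
        calc s (k+1) ≤ 2*s k*(t k + 2*s k) := hstep
          _ ≤ 2*s k*(1/3) := by nlinarith [hs0 k]
          _ = (2/3)*s k := by ring
          _ ≤ (2/3)*((2/3:ℝ)^k*s 0) := by nlinarith [hsk]
          _ = (2/3:ℝ)^(k+1)*s 0 := by rw [pow_succ]; ring
      refine ⟨hs1, ?_⟩
      have hTk := hT k
      have hpos : 0 ≤ t k + s k + s (k+1) := by
        have := hs0 (k+1); have := hs0 k; have := ht0 k; linarith
      have hθle : θ * (t k + s k + s (k+1)) ≤ t k + s k + s (k+1) := by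
        nlinarith [mul_le_mul_of_nonneg_right hθ1 hpos]
      have hgoal : t (k+1) ≤ t k + s k + s (k+1) := le_trans hTk hθle
      have hq1 : (2/3:ℝ)^(k+1) = (2/3) * (2/3:ℝ)^k := by rw [pow_succ]; ring
      have hs1' : s (k+1) ≤ (2/3) * ((2/3:ℝ)^k * s 0) := by
        rw [hq1] at hs1; linarith
      rw [hq1]
      linarith
  -- second induction
  have Q : ∀ k, t k ≤ θ^k * t 0 + 50 * s 0 * (θ^k - (2/3:ℝ)^k) := by
    intro k
    induction k with
    | zero => simp
    | succ k ih =>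
      have hP1 := (P k).1
      have hP2 := (P (k+1)).1
      have hqk0 : (0:ℝ) ≤ (2/3:ℝ)^k := by positivity
      have hθk0 : (0:ℝ) ≤ θ^k := pow_nonneg hθ0 k
      have hX0 : (0:ℝ) ≤ s 0 * (2/3:ℝ)^k := mul_nonneg hs00 hqk0
      have hq1 : (2/3:ℝ)^(k+1) = (2/3) * (2/3:ℝ)^k := by rw [pow_succ]; ring
      have hθ1' : θ^(k+1) = θ * θ^k := by rw [pow_succ]; ring
      have hs1 : s (k+1) ≤ (2/3) * ((2/3:ℝ)^k * s 0) := by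
        rw [hq1] at hP2; linarith
      have hsum : t k + s k + s (k+1)
          ≤ (θ^k * t 0 + 50 * s 0 * (θ^k - (2/3:ℝ)^k)) + (2/3:ℝ)^k * s 0
            + (2/3) * ((2/3:ℝ)^k * s 0) := by
        linarith
      have key := mul_le_mul_of_nonneg_left hsum hθ0
      have hTk := hT k
      have hθX : (20:ℝ)/29 * (s 0 * (2/3:ℝ)^k) ≤ θ * (s 0 * (2/3:ℝ)^k) := by
        nlinarith [mul_le_mul_of_nonneg_right hθ707 hX0]
      have step2 : θ * ((θ^k * t 0 + 50 * s 0 * (θ^k - (2/3:ℝ)^k)) + (2/3:ℝ)^k * s 0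
            + (2/3) * ((2/3:ℝ)^k * s 0))
          ≤ θ * θ^k * t 0 + 50 * s 0 * (θ * θ^k - (2/3) * (2/3:ℝ)^k) := by
        nlinarith [hθX, hX0]
      rw [hθ1', hq1]
      calc t (k+1) ≤ θ * (t k + s k + s (k+1)) := hTk
        _ ≤ θ * ((θ^k * t 0 + 50 * s 0 * (θ^k - (2/3:ℝ)^k)) + (2/3:ℝ)^k * s 0
            + (2/3) * ((2/3:ℝ)^k * s 0)) := key
        _ ≤ θ * θ^k * t 0 + 50 * s 0 * (θ * θ^k - (2/3) * (2/3:ℝ)^k) := step2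
        _ = θ * θ^k * t 0 + 50 * s 0 * (θ * θ^k - 2/3 * (2/3:ℝ)^k) := by ring
  -- conclusion
  intro k _
  have hQ := Q k
  have hP := (P k).1
  have hqθ : (2/3:ℝ) ≤ θ := by linarith
  have hqθk : (2/3:ℝ)^k ≤ θ^k := pow_le_pow_left₀ (by norm_num) hqθ k
  have hθk0 : (0:ℝ) ≤ θ^k := pow_nonneg hθ0 k
  have hqk0 : (0:ℝ) ≤ (2/3:ℝ)^k := by positivity
  have hfb : c * frobNorm (B k - J xs) ≤ t k + s k := hcB k
  have hX1 : (0:ℝ) ≤ s 0 * (2/3:ℝ)^k := mul_nonneg hs00 hqk0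
  have hX2 : s 0 * (2/3:ℝ)^k ≤ s 0 * θ^k := mul_le_mul_of_nonneg_left hqθk hs00
  have hts : t k + s k ≤ θ^k * (t 0 + 51 * s 0) := by nlinarith
  have hsmall : t 0 + 51 * s 0 ≤ 1 := by linarith
  have hexp : (1:ℝ) ≤ 2 * Real.exp 1 := by nlinarith [Real.add_one_le_exp 1]
  have hfinal : c * frobNorm (B k - J xs) ≤ θ^k * (2 * Real.exp 1) := by
    nlinarith [mul_le_mul_of_nonneg_left (le_trans hsmall hexp) hθk0]
  have hrpow : (1 - 1/(n:ℝ)) ^ ((k:ℝ)/2) = θ^k := by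
    rw [hθ, Real.sqrt_eq_rpow, ← Real.rpow_natCast ((1 - 1/(n:ℝ)) ^ ((1:ℝ)/2)) k,
      ← Real.rpow_mul h1n]
    congr 1
    ring
  calc frobNorm (B k - J xs) = c⁻¹ * (c * frobNorm (B k - J xs)) := by field_simp
    _ ≤ c⁻¹ * (θ^k * (2 * Real.exp 1)) :=
        mul_le_mul_of_nonneg_left hfinal (inv_nonneg.2 (le_of_lt hcpos))
    _ = 2 * c⁻¹ * Real.exp 1 * θ^k := by ring
    _ = 2 * c⁻¹ * Real.exp 1 * ((1 - 1/(n:ℝ)) ^ ((k:ℝ)/2)) := by rw [hrpow]
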